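/- Let M be a real Hilbert space and K ∈ L(M) a positive self-adjoint finite-rank operator, u ∈ M. Then det(I + K + u ⊗ u) = det(I + K) · (1 + ‖(I + K)^{-1/2} u‖²), where det denotes the Fredholm determinant (product of (1 + λₙ) over eigenvalues of the finite-rank perturbation). -/

import Mathlib

open scoped RealInnerProductSpace

/-- The rank-one operator `u ⊗ v : x ↦ ⟪v, x⟫ u` on a real inner product space. -/
noncomputable def rankOne {M : Type*} [NormedAddCommGroup M] [InnerProductSpace ℝ M]
    (u v : M) : M →L[ℝ] M := (innerSL ℝ v).smulRight u

/-- The Fredholm determinant `det (I + T)` of a perturbation of the identity by a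
finite-rank operator `T`.  Since `range T` is a finite-dimensional invariant subspace of
`I + T` containing all (generalized) eigenvectors of `T` with nonzero eigenvalue, this equals
the finite-dimensional determinant of `I + T` restricted to `range T`, i.e. the product
`Π (1 + λₙ)` over the nonzero eigenvalues `λₙ` of `T` counted with algebraic multiplicity. -/
noncomputable def fredholmDet {M : Type*} [NormedAddCommGroup M] [InnerProductSpace ℝ M]
    (T : M →L[ℝ] M) : ℝ :=
  LinearMap.det ((1 + T : M →L[ℝ] M).toLinearMap.restrict
    (p := LinearMap.range (T : M →ₗ[ℝ] M))
    (fun x hx => by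
      obtain ⟨y, rfl⟩ := hx
      exact ⟨y + T y, by simp [map_add]⟩))

/-- **Rank-one update of the Fredholm determinant.** Let `K` be positive self-adjoint of
finite rank on a real Hilbert space `M`, `u ∈ M`, and `R` the positive square root of
`I + K` (`R` positive self-adjoint with `R * R = I + K`, so `R⁻¹ = (I + K)^{-1/2}`). Then
`det(I + K + u ⊗ u) = det(I + K) · (1 + ‖(I + K)^{-1/2} u‖²)`. -/

private lemma det_eq_det_restrict {V : Type*} [AddCommGroup V] [Module ℝ V]
    [FiniteDimensional ℝ V] (f : V →ₗ[ℝ] V) (p : Submodule ℝ V)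
    (h : ∀ x : V, f x - x ∈ p) (hf : ∀ x ∈ p, f x ∈ p) :
    LinearMap.det f = LinearMap.det (f.restrict hf) := by
  classical
  obtain ⟨q, hq⟩ := p.exists_isCompl
  set e := Submodule.prodEquivOfIsCompl p q hq with he
  set b1 := Module.finBasis ℝ p with hb1
  set b2 := Module.finBasis ℝ q with hb2
  set b := (b1.prod b2).map e with hb
  have hrepr : ∀ x : V, b.repr x = (b1.prod b2).repr (e.symm x) := by
    intro x; rw [hb, Module.Basis.map_repr]; rfl
  have hrp : ∀ (y : p) (i), b.repr (↑y) (Sum.inl i) = b1.repr y i := by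
    intro y i
    rw [hrepr, Submodule.prodEquivOfIsCompl_symm_apply_left p q hq, Module.Basis.prod_repr_inl]
  have hrp' : ∀ (y : p) (i), b.repr (↑y) (Sum.inr i) = 0 := by
    intro y i
    rw [hrepr, Submodule.prodEquivOfIsCompl_symm_apply_left p q hq, Module.Basis.prod_repr_inr]
    simp
  have hrq : ∀ (z : q) (i), b.repr (↑z) (Sum.inl i) = 0 := by
    intro z i
    rw [hrepr, Submodule.prodEquivOfIsCompl_symm_apply_right p q hq, Module.Basis.prod_repr_inl]
    simp
  have hrq' : ∀ (z : q) (i), b.repr (↑z) (Sum.inr i) = b2.repr z i := by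
    intro z i
    rw [hrepr, Submodule.prodEquivOfIsCompl_symm_apply_right p q hq, Module.Basis.prod_repr_inr]
  have hbl : ∀ j, b (Sum.inl j) = ↑(b1 j) := by
    intro j
    rw [hb, Module.Basis.map_apply, he, Submodule.coe_prodEquivOfIsCompl',
      Module.Basis.prod_apply_inl_fst, Module.Basis.prod_apply_inl_snd]
    simp
  have hbr : ∀ j, b (Sum.inr j) = ↑(b2 j) := by
    intro j
    rw [hb, Module.Basis.map_apply, he, Submodule.coe_prodEquivOfIsCompl',
      Module.Basis.prod_apply_inr_fst, Module.Basis.prod_apply_inr_snd]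
    simp
  rw [← LinearMap.det_toMatrix b f, ← LinearMap.det_toMatrix b1 (f.restrict hf)]
  have key : LinearMap.toMatrix b b f =
      Matrix.fromBlocks (LinearMap.toMatrix b1 b1 (f.restrict hf))
        (Matrix.of fun i j => LinearMap.toMatrix b b f (Sum.inl i) (Sum.inr j)) 0 1 := by
    ext i j
    cases i with
    | inl i =>
      cases j with
      | inl j =>
        simp only [Matrix.fromBlocks_apply₁₁, LinearMap.toMatrix_apply]
        rw [hbl j]
        have : f ↑(b1 j) = ↑(f.restrict hf (b1 j)) := (LinearMap.restrict_coe_apply f hf _).symm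
        rw [this, hrp]
      | inr j => simp only [Matrix.fromBlocks_apply₁₂, Matrix.of_apply]
    | inr i =>
      cases j with
      | inl j =>
        simp only [Matrix.fromBlocks_apply₂₁, LinearMap.toMatrix_apply, Matrix.zero_apply]
        rw [hbl j]
        have hmem : f ↑(b1 j) ∈ p := hf _ (b1 j).2
        have : f ↑(b1 j) = ↑(⟨f ↑(b1 j), hmem⟩ : p) := rfl
        rw [this, hrp']
      | inr j =>
        simp only [Matrix.fromBlocks_apply₂₂, LinearMap.toMatrix_apply]
        rw [hbr j]
        have hd : f ↑(b2 j) = ↑(⟨f ↑(b2 j) - ↑(b2 j), h _⟩ : p) + ↑(b2 j) := by simp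
        rw [hd, map_add, Finsupp.add_apply, hrp', hrq', Module.Basis.repr_self, zero_add,
          Finsupp.single_apply, Matrix.one_apply]
        simp [eq_comm]
  rw [key, Matrix.det_fromBlocks_zero₂₁, Matrix.det_one, mul_one]

private lemma fredholmDet_eq_det_restrict {M : Type*} [NormedAddCommGroup M]
    [InnerProductSpace ℝ M] (T : M →L[ℝ] M) (V : Submodule ℝ M) [FiniteDimensional ℝ V]
    (hV : LinearMap.range (T : M →ₗ[ℝ] M) ≤ V)
    (hV' : ∀ x ∈ V, (1 + T : M →L[ℝ] M) x ∈ V) :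
    fredholmDet T = LinearMap.det ((1 + T : M →L[ℝ] M).toLinearMap.restrict hV') := by
  classical
  set W := LinearMap.range (T : M →ₗ[ℝ] M) with hW
  set g := (1 + T : M →L[ℝ] M).toLinearMap.restrict hV' with hg
  set p : Submodule ℝ V := W.comap V.subtype with hp
  have hcoe : ∀ x : V, ((g x : V) : M) = (x : M) + T (x : M) := by
    intro x
    rw [hg, LinearMap.restrict_coe_apply]
    simp
  have hgp : ∀ x ∈ p, g x ∈ p := by
    intro x hx
    show ((g x : V) : M) ∈ W
    rw [hcoe]
    exact W.add_mem hx ⟨(x : M), by simp⟩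
  have hsub : ∀ x : V, g x - x ∈ p := by
    intro x
    show ((g x - x : V) : M) ∈ W
    have : ((g x - x : V) : M) = T (x : M) := by
      push_cast [hcoe]; abel
    rw [this]
    exact ⟨(x : M), by simp⟩
  rw [det_eq_det_restrict g p hsub hgp]
  set e := Submodule.comapSubtypeEquivOfLe (hV : W ≤ V) with hee
  unfold fredholmDet
  rw [← LinearMap.det_conj ((g.restrict hgp)) e]
  congr 1


private lemma det_one_add_smulRight {V : Type*} [AddCommGroup V] [Module ℝ V]
    [FiniteDimensional ℝ V] (φ : V →ₗ[ℝ] ℝ) (a : V) :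
    LinearMap.det (LinearMap.id + φ.smulRight a) = 1 + φ a := by
  classical
  set b := Module.finBasis ℝ V with hb
  rw [← LinearMap.det_toMatrix b, map_add, LinearMap.toMatrix_id]
  have key : LinearMap.toMatrix b b (φ.smulRight a) =
      Matrix.replicateCol Unit (fun i => b.repr a i) * Matrix.replicateRow Unit (fun j => φ (b j)) := by
    ext i j
    simp [LinearMap.toMatrix_apply, Matrix.mul_apply, mul_comm]
  rw [key, Matrix.det_one_add_replicateCol_mul_replicateRow]
  congr 1
  rw [dotProduct]
  conv_rhs => rw [← b.sum_repr a, map_sum]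
  simp [mul_comm]

theorem fredholmDet_rankOne_update {M : Type*} [NormedAddCommGroup M] [InnerProductSpace ℝ M]
    [CompleteSpace M] (K : M →L[ℝ] M) (hK : K.IsPositive)
    (hfin : FiniteDimensional ℝ (LinearMap.range (K : M →ₗ[ℝ] M)))
    (R : M →L[ℝ] M) (hR : R.IsPositive) (hRsq : R * R = 1 + K) (u : M) :
    fredholmDet (K + rankOne u u) =
      fredholmDet K * (1 + ‖(Ring.inverse R) u‖ ^ 2) := by
  classical
  haveI := hfin
  -- `1 + K` is a unit
  have hUL : IsUnit (1 + K : M →L[ℝ] M) := by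
    apply ContinuousLinearMap.isUnit_of_forall_le_norm_inner_map _ (c := 1) one_pos
    intro x
    have h2 : (0:ℝ) ≤ ⟪K x, x⟫ := by simpa using hK.inner_nonneg_left x
    have h1 : ⟪(1 + K : M →L[ℝ] M) x, x⟫ = ‖x‖ ^ 2 + ⟪K x, x⟫ := by
      simp [ContinuousLinearMap.add_apply, inner_add_left, real_inner_self_eq_norm_sq]
    have : ‖x‖ ^ 2 ≤ ⟪(1 + K : M →L[ℝ] M) x, x⟫ := by rw [h1]; linarith
    push_cast
    rw [mul_one, Real.norm_eq_abs]
    exact this.trans (le_abs_self _)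
  obtain ⟨Lu, hLu⟩ := hUL
  set J : M →L[ℝ] M := (↑Lu⁻¹ : M →L[ℝ] M) with hJ
  have hJL : J * (1 + K) = 1 := by rw [hJ, ← hLu]; exact Lu.inv_mul
  have hLJ : (1 + K) * J = 1 := by rw [hJ, ← hLu]; exact Lu.mul_inv
  have hRL : (1 + K) * R = R * (1 + K) := by rw [← hRsq, mul_assoc]
  have hRJ : R * J = J * R := by
    calc R * J = J * ((1 + K) * R) * J := by rw [← mul_assoc, hJL, one_mul]
    _ = J * (R * (1 + K)) * J := by rw [hRL]
    _ = J * R * ((1 + K) * J) := by rw [← mul_assoc, mul_assoc (J * R)]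
    _ = J * R := by rw [hLJ, mul_one]
  set g : M →L[ℝ] M := J * R with hgdef
  have hgR : g * R = 1 := by rw [hgdef, mul_assoc, hRsq, hJL]
  have hRg : R * g = 1 := by rw [hgdef, ← mul_assoc, hRJ, mul_assoc, hRsq, hJL]
  have hRinv : Ring.inverse R = g := by
    have : R = ↑(⟨R, g, hRg, hgR⟩ : (M →L[ℝ] M)ˣ) := rfl
    rw [this, Ring.inverse_unit]
    rfl
  have hgg : g * g = J := by
    have : g * g = J * (R * (J * R)) := by rw [hgdef, mul_assoc]
    rw [this, hRg, mul_one]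
  -- self-adjointness
  have hLsa : IsSelfAdjoint (1 + K : M →L[ℝ] M) :=
    (IsSelfAdjoint.one (M →L[ℝ] M)).add hK.isSelfAdjoint
  have hJsa : IsSelfAdjoint J := by
    have h1 : (1 + K) * star J = 1 := by
      have := congrArg star hJL
      simpa [star_mul, hLsa.star_eq] using this
    show star J = J
    calc star J = (J * (1 + K)) * star J := by rw [hJL, one_mul]
    _ = J * ((1 + K) * star J) := by rw [mul_assoc]
    _ = J := by rw [h1, mul_one]
  have hgsa : IsSelfAdjoint g := by
    show star g = g
    rw [hgdef, star_mul, hR.isSelfAdjoint.star_eq, hJsa.star_eq, hRJ]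
  have hnorm : ‖g u‖ ^ 2 = ⟪u, J u⟫ := by
    have hadj : ContinuousLinearMap.adjoint g = g := by
      rw [← ContinuousLinearMap.star_eq_adjoint, hgsa.star_eq]
    have h1 : ⟪g u, g u⟫ = ⟪J u, u⟫ := by
      rw [← ContinuousLinearMap.adjoint_inner_left g, hadj, ← ContinuousLinearMap.mul_apply, hgg]
    rw [← real_inner_self_eq_norm_sq, h1, real_inner_comm]
  -- the invariant subspace
  set V : Submodule ℝ M := LinearMap.range (K : M →ₗ[ℝ] M) ⊔ (ℝ ∙ u) with hV
  have huV : u ∈ V := Submodule.mem_sup_right (Submodule.mem_span_singleton_self u)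
  have hKmem : ∀ x : M, K x ∈ V := fun x => Submodule.mem_sup_left (LinearMap.mem_range_self _ x)
  have hJmem : ∀ x ∈ V, J x ∈ V := by
    intro x hx
    have h2 : J x + K (J x) = x := by
      have := congrArg (fun A : M →L[ℝ] M => A x) hLJ
      simpa [ContinuousLinearMap.mul_apply, ContinuousLinearMap.add_apply] using this
    have h1 : J x = x - K (J x) := eq_sub_of_add_eq h2
    rw [h1]
    exact V.sub_mem hx (hKmem _)
  have hrOmem : ∀ x : M, rankOne u u x ∈ V := by
    intro x
    show (innerSL ℝ u).smulRight u x ∈ V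
    rw [ContinuousLinearMap.smulRight_apply]
    exact V.smul_mem _ huV
  have hrK : LinearMap.range (K : M →ₗ[ℝ] M) ≤ V := le_sup_left
  have hrT : LinearMap.range ((K + rankOne u u : M →L[ℝ] M) : M →ₗ[ℝ] M) ≤ V := by
    rintro _ ⟨x, rfl⟩
    have : ((K + rankOne u u : M →L[ℝ] M) : M →ₗ[ℝ] M) x = K x + rankOne u u x := rfl
    rw [this]
    exact V.add_mem (hKmem x) (hrOmem x)
  have hA' : ∀ x ∈ V, (1 + K : M →L[ℝ] M) x ∈ V := by
    intro x hx
    have : (1 + K : M →L[ℝ] M) x = x + K x := rfl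
    rw [this]; exact V.add_mem hx (hKmem x)
  have hB' : ∀ x ∈ V, (1 + (K + rankOne u u) : M →L[ℝ] M) x ∈ V := by
    intro x hx
    have : (1 + (K + rankOne u u) : M →L[ℝ] M) x = x + (K x + rankOne u u x) := rfl
    rw [this]; exact V.add_mem hx (V.add_mem (hKmem x) (hrOmem x))
  rw [fredholmDet_eq_det_restrict (K + rankOne u u) V hrT hB',
    fredholmDet_eq_det_restrict K V hrK hA', hRinv, hnorm]
  set A := (1 + K : M →L[ℝ] M).toLinearMap.restrict hA' with hA
  set B := (1 + (K + rankOne u u) : M →L[ℝ] M).toLinearMap.restrict hB' with hBdef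
  set a : V := ⟨J u, hJmem u huV⟩ with ha
  set φ : V →ₗ[ℝ] ℝ := (innerSL ℝ u : M →L[ℝ] ℝ).toLinearMap.comp V.subtype with hφ
  have hLJu : (1 + K : M →L[ℝ] M) (J u) = u := by
    have := congrArg (fun A : M →L[ℝ] M => A u) hLJ
    simpa [ContinuousLinearMap.mul_apply] using this
  have hfact : B = A ∘ₗ (LinearMap.id + φ.smulRight a) := by
    refine LinearMap.ext fun x => Subtype.ext ?_
    have hrhs : ((A ((LinearMap.id + φ.smulRight a : V →ₗ[ℝ] V) x) : V) : M)
        = (1 + K : M →L[ℝ] M) ((x : M) + ⟪u, (x : M)⟫ • J u) := by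
      rw [hA, LinearMap.restrict_coe_apply]
      congr 1
    rw [hBdef, LinearMap.restrict_coe_apply, LinearMap.comp_apply, hrhs, map_add, map_smul, hLJu]
    simp [rankOne, ContinuousLinearMap.add_apply, add_assoc]
  rw [hfact, LinearMap.det_comp, det_one_add_smulRight]
  congr 2
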